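/- arXiv:1802.09190 — 2 statements merged into one kernel-verified Lean document; each statement's English description precedes it below -/
import Mathlib

section
/- Let a > 0, n ∈ ℕ, and t ∈ ℝ. Then for all x ∈ ℝ, Σ_{k=0}^{n} ((−n)_k / k!) · C_{n−k}(x; a) · e^{nt} (1−e^{−t})^k = C_n(x; a·e^{−t}). (These are the orthogonal polynomials for the Toda-modified Charlier weight.) -/
open Finset

/-- Pochhammer symbol `(b)_j = b(b+1)⋯(b+j-1)`. -/
noncomputable def poch (b : ℝ) (j : ℕ) : ℝ := ∏ i ∈ Finset.range j, (b + i)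

/-- Charlier polynomial `C_n(x; a)`. -/
noncomputable def charlierC (n : ℕ) (x a : ℝ) : ℝ :=
  ∑ k ∈ Finset.range (n + 1),
    poch (-(n : ℝ)) k * poch (-x) k / (k.factorial : ℝ) * (-1 / a) ^ k

lemma poch_add (b : ℝ) (j k : ℕ) : poch b (j + k) = poch b j * poch (b + j) k := by
  unfold poch
  rw [Finset.prod_range_add]
  congr 1
  refine Finset.prod_congr rfl fun i _ => ?_
  push_cast; ring

lemma poch_neg_eq_zero {m j : ℕ} (h : m < j) : poch (-(m : ℝ)) j = 0 := by
  unfold poch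
  exact Finset.prod_eq_zero (Finset.mem_range.2 h) (by simp)

lemma poch_neg_nat (m : ℕ) : ∀ k : ℕ, poch (-(m : ℝ)) k = (-1) ^ k * (m.descFactorial k : ℝ) := by
  intro k
  induction k with
  | zero => simp [poch]
  | succ k ih =>
    unfold poch at *
    rw [Finset.prod_range_succ, ih, Nat.descFactorial_succ]
    rcases lt_or_ge k m with h | h
    · push_cast [Nat.cast_sub h.le]; ring
    · rcases eq_or_lt_of_le h with rfl | h2
      · simp
      · rw [Nat.descFactorial_eq_zero_iff_lt.2 h2]; simp

lemma binom (m n : ℕ) (h : m ≤ n) (z : ℝ) :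
    ∑ k ∈ Finset.range (n + 1), poch (-(m : ℝ)) k / (k.factorial : ℝ) * z ^ k = (1 - z) ^ m := by
  have key : ∀ k : ℕ, poch (-(m : ℝ)) k / (k.factorial : ℝ) * z ^ k
      = (m.choose k : ℝ) * (-z) ^ k := by
    intro k
    rw [poch_neg_nat, Nat.descFactorial_eq_factorial_mul_choose]
    have hk : (k.factorial : ℝ) ≠ 0 := by positivity
    push_cast
    field_simp
    ring
  simp_rw [key]
  rw [show (1 : ℝ) - z = -z + 1 by ring, add_pow]
  rw [← Finset.sum_subset (Finset.range_subset_range.2 (by omega) :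
      Finset.range (m+1) ⊆ Finset.range (n+1))]
  · refine Finset.sum_congr rfl fun k hk => ?_
    rw [one_pow]; ring
  · intro k _ hk
    simp only [Finset.mem_range, not_lt] at hk
    rw [Nat.choose_eq_zero_of_lt (by omega)]
    simp

lemma charlier_key (a s : ℝ) (hs : s ≠ 0) (n : ℕ) (x : ℝ) :
    ∑ k ∈ Finset.range (n + 1),
        poch (-(n : ℝ)) k / (k.factorial : ℝ) * charlierC (n - k) x a * (1 - s) ^ k
      = s ^ n * charlierC n x (a * s) := by
  calc
    ∑ k ∈ Finset.range (n + 1),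
        poch (-(n : ℝ)) k / (k.factorial : ℝ) * charlierC (n - k) x a * (1 - s) ^ k
      = ∑ k ∈ Finset.range (n + 1), ∑ j ∈ Finset.range (n + 1),
          poch (-(n : ℝ)) k / (k.factorial : ℝ) *
            (poch (-((n - k : ℕ) : ℝ)) j * poch (-x) j / (j.factorial : ℝ) * (-1 / a) ^ j) *
            (1 - s) ^ k := by
        refine Finset.sum_congr rfl fun k hk => ?_
        simp only [Finset.mem_range] at hk
        rw [charlierC,
          Finset.sum_subset (Finset.range_subset_range.2 (by omega) :
            Finset.range ((n - k) + 1) ⊆ Finset.range (n + 1))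
            (fun j _ hj => by
              simp only [Finset.mem_range, not_lt] at hj
              rw [poch_neg_eq_zero (show n - k < j by omega)]
              ring),
          Finset.mul_sum, Finset.sum_mul]
    _ = ∑ j ∈ Finset.range (n + 1), ∑ k ∈ Finset.range (n + 1),
          poch (-(n : ℝ)) k / (k.factorial : ℝ) *
            (poch (-((n - k : ℕ) : ℝ)) j * poch (-x) j / (j.factorial : ℝ) * (-1 / a) ^ j) *
            (1 - s) ^ k := Finset.sum_comm
    _ = ∑ j ∈ Finset.range (n + 1),
          poch (-(n : ℝ)) j * poch (-x) j / (j.factorial : ℝ) * (-1 / a) ^ j * s ^ (n - j) := by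
        refine Finset.sum_congr rfl fun j hj => ?_
        simp only [Finset.mem_range] at hj
        have step : ∀ k ∈ Finset.range (n + 1),
            poch (-(n : ℝ)) k / (k.factorial : ℝ) *
              (poch (-((n - k : ℕ) : ℝ)) j * poch (-x) j / (j.factorial : ℝ) * (-1 / a) ^ j) *
              (1 - s) ^ k
            = poch (-(n : ℝ)) j * poch (-x) j / (j.factorial : ℝ) * (-1 / a) ^ j *
                (poch (-((n - j : ℕ) : ℝ)) k / (k.factorial : ℝ) * (1 - s) ^ k) := by
          intro k hk
          simp only [Finset.mem_range] at hk
          have hck : (-((n - k : ℕ) : ℝ)) = -(n : ℝ) + k := by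
            push_cast [Nat.cast_sub (by omega : k ≤ n)]; ring
          have hcj : (-((n - j : ℕ) : ℝ)) = -(n : ℝ) + j := by
            push_cast [Nat.cast_sub (by omega : j ≤ n)]; ring
          have hmain : poch (-(n : ℝ)) k * poch (-((n - k : ℕ) : ℝ)) j
              = poch (-(n : ℝ)) j * poch (-((n - j : ℕ) : ℝ)) k := by
            rw [hck, hcj, ← poch_add, ← poch_add, add_comm]
          linear_combination (poch (-x) j / (j.factorial : ℝ) * (-1 / a) ^ j *
            (1 - s) ^ k / (k.factorial : ℝ)) * hmain
        rw [Finset.sum_congr rfl step, ← Finset.mul_sum,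
          binom (n - j) n (Nat.sub_le n j) (1 - s), show (1 : ℝ) - (1 - s) = s by ring]
    _ = s ^ n * charlierC n x (a * s) := by
        rw [charlierC, Finset.mul_sum]
        refine Finset.sum_congr rfl fun j hj => ?_
        simp only [Finset.mem_range] at hj
        have h1 : (-1 / (a * s)) = (-1 / a) * s⁻¹ := by
          rw [div_eq_mul_inv, mul_inv, div_eq_mul_inv]; ring
        have h2 : s ^ (n - j) * s ^ j = s ^ n := pow_sub_mul_pow s (by omega)
        rw [h1, mul_pow, ← h2, inv_pow]
        have h3 : s ^ j * (s ^ j)⁻¹ = 1 := mul_inv_cancel₀ (pow_ne_zero j hs)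
        linear_combination (-(poch (-(n : ℝ)) j * poch (-x) j / (j.factorial : ℝ) *
          (-1 / a) ^ j * s ^ (n - j))) * h3

theorem charlier_toda_expansion_first (a : ℝ) (ha : 0 < a) (n : ℕ) (t : ℝ) (x : ℝ) :
    ∑ k ∈ Finset.range (n + 1),
        poch (-(n : ℝ)) k / (k.factorial : ℝ) * charlierC (n - k) x a *
          Real.exp (n * t) * (1 - Real.exp (-t)) ^ k =
      charlierC n x (a * Real.exp (-t)) := by
  have hs : Real.exp (-t) ≠ 0 := (Real.exp_pos _).ne'
  have h1 : Real.exp (n * t) * Real.exp (-t) ^ n = 1 := by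
    rw [← Real.exp_nat_mul, ← Real.exp_add, show (n : ℝ) * t + n * (-t) = 0 by ring,
      Real.exp_zero]
  calc
    ∑ k ∈ Finset.range (n + 1),
        poch (-(n : ℝ)) k / (k.factorial : ℝ) * charlierC (n - k) x a *
          Real.exp (n * t) * (1 - Real.exp (-t)) ^ k
      = Real.exp (n * t) * ∑ k ∈ Finset.range (n + 1),
          poch (-(n : ℝ)) k / (k.factorial : ℝ) * charlierC (n - k) x a *
            (1 - Real.exp (-t)) ^ k := by
        rw [Finset.mul_sum]
        exact Finset.sum_congr rfl fun k _ => by ring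
    _ = Real.exp (n * t) * (Real.exp (-t) ^ n * charlierC n x (a * Real.exp (-t))) := by
        rw [charlier_key a _ hs]
    _ = charlierC n x (a * Real.exp (-t)) := by rw [← mul_assoc, h1, one_mul]
end

section
/- Let λ > 0, 0 < φ < π, and m, n ∈ ℕ. Then for all x ∈ ℂ, binom(n+m, n) · P_{m+n}^{(λ)}(x; φ) = Σ_{k=0}^{min(n,m)} ((−i)^k e^{−ikφ} / k!) · (2 sin φ)^k · (λ+ix)_k · P_{n−k}^{(λ+k/2)}(x − ik/2; φ) · P_{m−k}^{(λ+(n+k)/2)}(x + i(n−k)/2; φ), where i is the imaginary unit. -/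
open Finset Complex

/-- Pochhammer symbol `(a)_j = a(a+1)⋯(a+j-1)` for complex `a`. -/
noncomputable def pochC (a : ℂ) (j : ℕ) : ℂ := ∏ i ∈ Finset.range j, (a + i)

/-- Meixner–Pollaczek polynomial `P_n^{(λ)}(x; φ)` for complex `x`. -/
noncomputable def mpP (n : ℕ) (lam φ : ℝ) (x : ℂ) : ℂ :=
  pochC (2 * lam) n / (n.factorial : ℂ) * Complex.exp ((n : ℂ) * φ * Complex.I) *
    ∑ k ∈ Finset.range (n + 1),
      pochC (-(n : ℂ)) k * pochC ((lam : ℂ) + Complex.I * x) k /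
          (pochC (2 * lam) k * (k.factorial : ℂ)) *
        (1 - Complex.exp (-2 * φ * Complex.I)) ^ k

lemma pochC_succ (a : ℂ) (n : ℕ) : pochC a (n+1) = pochC a n * (a + n) := by
  simp [pochC, Finset.prod_range_succ]

lemma pochC_add (a : ℂ) (i j : ℕ) : pochC a (i + j) = pochC a i * pochC (a + i) j := by
  simp only [pochC, Finset.prod_range_add]
  exact congrArg _ (Finset.prod_congr rfl fun t _ => by push_cast; ring)

lemma vand (a b : ℂ) : ∀ R : ℕ,
    ∑ r ∈ range (R+1), (R.choose r : ℂ) * pochC a r * pochC b (R-r) = pochC (a+b) R := by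
  intro R
  induction R with
  | zero => simp [pochC]
  | succ R ih =>
    set f : ℕ → ℂ := fun r => ((R+1).choose r : ℂ) * pochC a r * pochC b (R+1-r) with hf
    set g : ℕ → ℂ := fun r => (R.choose r : ℂ) * pochC a r * pochC b (R+1-r) with hg
    have hA : ∑ r ∈ range (R+2), f r = f 0 + ∑ r ∈ range (R+1), f (r+1) := by
      rw [Finset.sum_range_succ' f (R+1)]; ring
    have hG : ∑ r ∈ range (R+2), g r = g 0 + ∑ r ∈ range (R+1), g (r+1) := by
      rw [Finset.sum_range_succ' g (R+1)]; ring
    have hG2 : ∑ r ∈ range (R+2), g r = ∑ r ∈ range (R+1), g r + g (R+1) :=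
      Finset.sum_range_succ g (R+1)
    have hgtop : g (R+1) = 0 := by simp [hg]
    have hf0 : f 0 = g 0 := by simp [hf, hg]
    have hsplit : ∀ r, f (r+1) = g (r+1) + (R.choose r : ℂ) * pochC a (r+1) * pochC b (R-r) := by
      intro r
      have : ((R+1).choose (r+1) : ℂ) = (R.choose (r+1) : ℂ) + (R.choose r : ℂ) := by
        rw [Nat.choose_succ_succ]; push_cast; ring
      simp only [hf, hg, this]
      have h2 : R + 1 - (r+1) = R - r := by omega
      rw [h2]; ring
    calc ∑ r ∈ range (R+2), f r
        = f 0 + ∑ r ∈ range (R+1), f (r+1) := hA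
      _ = f 0 + (∑ r ∈ range (R+1), g (r+1)
            + ∑ r ∈ range (R+1), (R.choose r : ℂ) * pochC a (r+1) * pochC b (R-r)) := by
          rw [← Finset.sum_add_distrib]
          exact congrArg _ (Finset.sum_congr rfl fun r _ => hsplit r)
      _ = ∑ r ∈ range (R+1), g r
            + ∑ r ∈ range (R+1), (R.choose r : ℂ) * pochC a (r+1) * pochC b (R-r) := by
          rw [hf0]
          have : g 0 + ∑ r ∈ range (R+1), g (r+1) = ∑ r ∈ range (R+1), g r := by
            rw [← hG, hG2, hgtop, add_zero]
          rw [← this]; ring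
      _ = ∑ r ∈ range (R+1), ((R.choose r : ℂ) * pochC a r * pochC b (R-r)) * ((a+b) + R) := by
          rw [← Finset.sum_add_distrib]
          refine Finset.sum_congr rfl fun r hr => ?_
          rw [mem_range] at hr
          have h1 : R + 1 - r = (R - r) + 1 := by omega
          have h2 : ((R - r : ℕ) : ℂ) = (R : ℂ) - r := by
            push_cast [Nat.cast_sub (by omega : r ≤ R)]; ring
          simp only [hg]
          rw [h1, pochC_succ, pochC_succ, h2]
          ring
      _ = pochC (a+b) (R+1) := by
          rw [← Finset.sum_mul, ih, pochC_succ]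

lemma pochC_one (a : ℂ) : pochC a 1 = a := by simp [pochC]
lemma pochC_succ' (a : ℂ) (n : ℕ) : pochC a (n+1) = a * pochC (a+1) n := by
  calc pochC a (n+1) = pochC a (1+n) := by rw [add_comm n 1]
    _ = pochC a 1 * pochC (a + (1:ℕ)) n := pochC_add a 1 n
    _ = a * pochC (a+1) n := by rw [pochC_one]; norm_num

lemma Rlem : ∀ (h : ℕ) (a : ℂ) (i : ℕ),
    ∑ k ∈ range (h+1), (i.choose k : ℂ) * (h.choose k : ℂ) * (k.factorial : ℂ) * pochC (a + k) (h - k)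
      = pochC (a + i) h := by
  intro h
  induction h with
  | zero => intro a i; simp [pochC]
  | succ h ih =>
    intro a i
    induction i with
    | zero =>
      rw [Finset.sum_range_succ']
      simp [pochC_succ, Nat.choose_zero_succ]
    | succ i ihi =>
      set f : ℕ → ℂ := fun k => ((i+1).choose k : ℂ) * ((h+1).choose k : ℂ) * (k.factorial : ℂ) * pochC (a + k) (h+1-k) with hf
      set g : ℕ → ℂ := fun k => (i.choose k : ℂ) * ((h+1).choose k : ℂ) * (k.factorial : ℂ) * pochC (a + k) (h+1-k) with hg
      have hA : ∑ k ∈ range (h+2), f k = f 0 + ∑ k ∈ range (h+1), f (k+1) := by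
        rw [Finset.sum_range_succ' f (h+1)]; ring
      have hG : ∑ k ∈ range (h+2), g k = g 0 + ∑ k ∈ range (h+1), g (k+1) := by
        rw [Finset.sum_range_succ' g (h+1)]; ring
      have hsplit : ∀ k, f (k+1) = g (k+1)
          + (i.choose k : ℂ) * (((h+1).choose (k+1) : ℕ) : ℂ) * ((k+1).factorial : ℂ) * pochC (a + (k+1)) (h - k) := by
        intro k
        have hc : ((i+1).choose (k+1) : ℂ) = (i.choose (k+1) : ℂ) + (i.choose k : ℂ) := by
          rw [Nat.choose_succ_succ]; push_cast; ring
        simp only [hf, hg, hc]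
        have h2 : h + 1 - (k+1) = h - k := by omega
        rw [h2]; push_cast; ring
      have extra : ∑ k ∈ range (h+1),
          (i.choose k : ℂ) * (((h+1).choose (k+1) : ℕ) : ℂ) * ((k+1).factorial : ℂ) * pochC (a + (k+1)) (h - k)
          = ((h:ℂ)+1) * pochC ((a+1) + i) h := by
        rw [← ih (a+1) i, Finset.mul_sum]
        refine Finset.sum_congr rfl fun k hk => ?_
        have hnat : ((h+1).choose (k+1)) * ((k+1).factorial) = (h+1) * (h.choose k * k.factorial) := by
          have base : (h+1) * h.choose k = (h+1).choose (k+1) * (k+1) := by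
            simpa [Nat.succ_eq_add_one] using Nat.add_one_mul_choose_eq h k
          calc (h+1).choose (k+1) * (k+1).factorial
              = ((h+1).choose (k+1) * (k+1)) * k.factorial := by rw [Nat.factorial_succ]; ring
            _ = ((h+1) * h.choose k) * k.factorial := by rw [← base]
            _ = (h+1) * (h.choose k * k.factorial) := by ring
        have hbase : a + ((k:ℂ) + 1) = (a + 1) + (k : ℂ) := by ring
        have := congrArg (fun t : ℕ => (t : ℂ)) hnat
        push_cast at this
        calc (i.choose k : ℂ) * (((h+1).choose (k+1) : ℕ) : ℂ) * ((k+1).factorial : ℂ) * pochC (a + ((k:ℂ) + 1)) (h - k)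
            = (i.choose k : ℂ) * ((((h+1).choose (k+1) : ℕ) : ℂ) * ((k+1).factorial : ℂ)) * pochC ((a+1) + k) (h - k) := by
              rw [hbase]; ring
          _ = ((h:ℂ)+1) * ((i.choose k : ℂ) * (h.choose k : ℂ) * (k.factorial : ℂ) * pochC ((a+1) + k) (h - k)) := by
              rw [this]; ring
      have hfg0 : f 0 = g 0 := by simp [hf, hg]
      have base1 : a + (((i:ℕ)+1 : ℕ) : ℂ) = (a + i) + 1 := by push_cast; ring
      have base2 : (a+1) + (i : ℂ) = (a + i) + 1 := by ring
      calc ∑ k ∈ range (h+2), f k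
          = f 0 + ∑ k ∈ range (h+1), f (k+1) := hA
        _ = (g 0 + ∑ k ∈ range (h+1), g (k+1)) + ((h:ℂ)+1) * pochC ((a+1) + i) h := by
            rw [hfg0]
            have : ∑ k ∈ range (h+1), f (k+1) = ∑ k ∈ range (h+1), g (k+1)
                + ∑ k ∈ range (h+1), (i.choose k : ℂ) * (((h+1).choose (k+1) : ℕ) : ℂ) * ((k+1).factorial : ℂ) * pochC (a + (k+1)) (h - k) := by
              rw [← Finset.sum_add_distrib]
              exact Finset.sum_congr rfl fun k _ => hsplit k
            rw [this, extra]; push_cast; ring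
        _ = pochC (a + i) (h+1) + ((h:ℂ)+1) * pochC ((a + i) + 1) h := by
            rw [← hG, ihi, base2]
        _ = pochC (a + ((i:ℕ)+1 : ℕ)) (h+1) := by
            rw [base1]
            rw [pochC_succ' (a + (i:ℂ)) h, pochC_succ ((a + (i:ℂ))+1) h]
            ring

lemma tri_swap (f : ℕ → ℕ → ℂ) : ∀ N : ℕ,
    ∑ j ∈ range (N+1), ∑ i ∈ range (j+1), f i j
      = ∑ i ∈ range (N+1), ∑ d ∈ range (N-i+1), f i (i+d) := by
  intro N
  induction N with
  | zero => simp
  | succ N ih =>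
    rw [Finset.sum_range_succ (fun j => ∑ i ∈ range (j+1), f i j) (N+1), ih,
      Finset.sum_range_succ (fun i => ∑ d ∈ range (N+1-i+1), f i (i+d)) (N+1)]
    have h1 : ∀ i ∈ range (N+1), ∑ d ∈ range (N+1-i+1), f i (i+d)
        = (∑ d ∈ range (N-i+1), f i (i+d)) + f i (N+1) := by
      intro i hi; rw [mem_range] at hi
      have e : N+1-i+1 = (N-i+1)+1 := by omega
      rw [e, Finset.sum_range_succ]
      have e3 : i + (N-i+1) = N+1 := by omega
      rw [e3]
    rw [Finset.sum_congr rfl h1, Finset.sum_add_distrib]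
    have e2 : N+1-(N+1)+1 = 1 := by omega
    rw [e2, Finset.sum_range_one,
      Finset.sum_range_succ (fun i => f i (N+1)) (N+1)]
    ring

lemma fact_ne (r : ℕ) : ((r.factorial : ℕ) : ℂ) ≠ 0 :=
  Nat.cast_ne_zero.mpr (Nat.factorial_ne_zero r)

noncomputable def Sfn (N : ℕ) (a b p : ℂ) : ℂ :=
  ∑ i ∈ range (N+1), pochC a i * pochC b (N-i) * p^i / ((i.factorial : ℂ) * ((N-i).factorial : ℂ))

lemma vand_div (c b : ℂ) (M : ℕ) :
    ∑ d ∈ range (M+1), pochC c d * pochC b (M-d) / ((d.factorial : ℂ) * ((M-d).factorial : ℂ))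
      = pochC (c+b) M / (M.factorial : ℂ) := by
  rw [← vand c b M, Finset.sum_div]
  refine Finset.sum_congr rfl fun d hd => ?_
  rw [mem_range] at hd
  have hfac : ((M.choose d : ℕ) : ℂ) * (d.factorial : ℂ) * ((M-d).factorial : ℂ) = (M.factorial : ℂ) := by
    have := Nat.choose_mul_factorial_mul_factorial (by omega : d ≤ M)
    exact_mod_cast congrArg (fun t : ℕ => (t : ℂ)) this
  rw [div_eq_div_iff (mul_ne_zero (fact_ne d) (fact_ne (M-d))) (fact_ne M), ← hfac]
  ring

lemma A2 (N : ℕ) (a b p : ℂ) :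
    ∑ k ∈ range (N+1), pochC (a+b+k) (N-k) * pochC a k * (p-1)^k
        / (((N-k).factorial : ℂ) * (k.factorial : ℂ))
      = Sfn N a b p := by
  symm
  calc Sfn N a b p
      = ∑ j ∈ range (N+1), ∑ k ∈ range (j+1),
          pochC a j * pochC b (N-j) * ((p-1)^k * (j.choose k : ℂ))
            / ((j.factorial:ℂ) * ((N-j).factorial:ℂ)) := by
        refine Finset.sum_congr rfl fun j hj => ?_
        have hp : p ^ j = ∑ k ∈ range (j+1), (p-1)^k * (j.choose k : ℂ) := by
          have h := add_pow (p-1) (1:ℂ) j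
          rw [sub_add_cancel] at h
          simpa using h
        rw [hp, Finset.mul_sum, Finset.sum_div]
    _ = ∑ k ∈ range (N+1), ∑ d ∈ range (N-k+1),
          pochC a (k+d) * pochC b (N-(k+d)) * ((p-1)^k * ((k+d).choose k : ℂ))
            / (((k+d).factorial:ℂ) * ((N-(k+d)).factorial:ℂ)) :=
        tri_swap (fun k j => pochC a j * pochC b (N-j) * ((p-1)^k * (j.choose k : ℂ))
            / ((j.factorial:ℂ) * ((N-j).factorial:ℂ))) N
    _ = ∑ k ∈ range (N+1), pochC a k * (p-1)^k / (k.factorial : ℂ)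
          * ∑ d ∈ range (N-k+1), pochC (a+k) d * pochC b ((N-k)-d)
              / ((d.factorial : ℂ) * (((N-k)-d).factorial : ℂ)) := by
        refine Finset.sum_congr rfl fun k hk => ?_
        rw [mem_range] at hk
        rw [Finset.mul_sum]
        refine Finset.sum_congr rfl fun d hd => ?_
        rw [mem_range] at hd
        have e1 : N - (k+d) = (N-k)-d := by omega
        have hsym : (k+d).choose k = (k+d).choose d := by
          have h2 := Nat.choose_symm (Nat.le_add_right k d)
          simpa using h2.symm
        have hfac : (((k+d).choose d : ℕ) : ℂ) * (k.factorial : ℂ) * (d.factorial : ℂ)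
            = ((k+d).factorial : ℂ) := by
          exact_mod_cast congrArg (fun t : ℕ => (t : ℂ)) (Nat.add_choose_mul_factorial_mul_factorial k d)
        rw [e1, pochC_add a k d, hsym, div_mul_div_comm,
          div_eq_div_iff (mul_ne_zero (fact_ne (k+d)) (fact_ne (N-k-d)))
            (mul_ne_zero (fact_ne k) (mul_ne_zero (fact_ne d) (fact_ne (N-k-d)))), ← hfac]
        ring
    _ = ∑ k ∈ range (N+1), pochC (a+b+k) (N-k) * pochC a k * (p-1)^k
          / (((N-k).factorial : ℂ) * (k.factorial : ℂ)) := by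
        refine Finset.sum_congr rfl fun k hk => ?_
        rw [vand_div (a+k) b (N-k)]
        have e : a + (k:ℂ) + b = a + b + (k:ℂ) := by ring
        rw [e, div_mul_div_comm]
        ring

lemma pochC_ne_zero (c : ℂ) (hc : 0 < c.re) (k : ℕ) : pochC c k ≠ 0 := by
  unfold pochC
  refine Finset.prod_ne_zero_iff.mpr fun i _ => fun h => ?_
  have h2 := congrArg Complex.re h
  simp only [Complex.add_re, Complex.natCast_re, Complex.zero_re] at h2
  have h3 : (0:ℝ) ≤ (i:ℝ) := Nat.cast_nonneg i
  linarith

lemma pochC_neg_nat : ∀ (n k : ℕ), k ≤ n →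
    pochC (-(n:ℂ)) k * (((n-k).factorial : ℕ) : ℂ) = (-1)^k * (n.factorial : ℂ) := by
  intro n k
  induction k with
  | zero => intro _; simp [pochC]
  | succ k ih =>
    intro hk
    have ihk := ih (by omega)
    have e1 : n - k = (n-(k+1)) + 1 := by omega
    have e4n : (n - k).factorial = (n - k) * (n-(k+1)).factorial := by
      calc (n-k).factorial = ((n-(k+1))+1).factorial := by rw [← e1]
        _ = ((n-(k+1))+1) * (n-(k+1)).factorial := Nat.factorial_succ _
        _ = (n-k) * (n-(k+1)).factorial := by rw [← e1]
    have e4 : ((n - k).factorial : ℂ) = ((n-k : ℕ) : ℂ) * ((n - (k+1)).factorial : ℂ) := by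
      exact_mod_cast congrArg (fun t : ℕ => (t : ℂ)) e4n
    have e3 : (-(n:ℂ)) + (k:ℂ) = -(((n-k : ℕ)) : ℂ) := by
      push_cast [Nat.cast_sub (by omega : k ≤ n)]; ring
    rw [pochC_succ, e3]
    calc pochC (-(n:ℂ)) k * (-((n-k:ℕ):ℂ)) * ((n-(k+1)).factorial : ℂ)
        = -(pochC (-(n:ℂ)) k * (((n-k:ℕ):ℂ) * ((n - (k+1)).factorial : ℂ))) := by ring
      _ = -(pochC (-(n:ℂ)) k * ((n-k).factorial : ℂ)) := by rw [← e4]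
      _ = -((-1)^k * (n.factorial : ℂ)) := by rw [mul_comm (pochC (-(n:ℂ)) k) _] at ihk ⊢; rw [ihk]
      _ = (-1)^(k+1) * n.factorial := by ring

lemma mpP_eq (n : ℕ) (lam φ : ℝ) (x : ℂ) (hlam : 0 < lam) :
    mpP n lam φ x = Complex.exp ((n:ℂ) * φ * I)
      * Sfn n ((lam:ℂ) + I*x) ((lam:ℂ) - I*x) (Complex.exp (-2 * φ * I)) := by
  set a := (lam:ℂ) + I*x with ha
  set b := (lam:ℂ) - I*x with hb
  set p := Complex.exp (-2 * (φ:ℂ) * I) with hp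
  have hab : a + b = 2 * (lam:ℂ) := by rw [ha, hb]; ring
  have hre : (0:ℝ) < (2 * (lam:ℂ)).re := by
    simp only [Complex.mul_re, Complex.ofReal_re, Complex.ofReal_im]
    norm_num; linarith
  have key : pochC (2*(lam:ℂ)) n / (n.factorial : ℂ)
      * (∑ k ∈ range (n+1), pochC (-(n:ℂ)) k * pochC a k / (pochC (2*(lam:ℂ)) k * (k.factorial:ℂ)) * (1 - p)^k)
      = Sfn n a b p := by
    rw [Finset.mul_sum]
    refine (Finset.sum_congr rfl fun k hk => ?_).trans (A2 n a b p)
    rw [mem_range] at hk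
    have hk' : k ≤ n := by omega
    have hBk : pochC (2*(lam:ℂ)) k ≠ 0 := pochC_ne_zero _ hre k
    have hneg' : pochC (-(n:ℂ)) k = (-1)^k * (n.factorial : ℂ) / ((n-k).factorial : ℂ) :=
      (eq_div_iff (fact_ne (n-k))).mpr (pochC_neg_nat n k hk')
    have hsplit : pochC (2*(lam:ℂ)) n = pochC (2*(lam:ℂ)) k * pochC (2*(lam:ℂ) + k) (n-k) := by
      calc pochC (2*(lam:ℂ)) n = pochC (2*(lam:ℂ)) (k + (n-k)) := by rw [show k + (n-k) = n by omega]
        _ = _ := pochC_add _ k (n-k)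
    have hq : (p-1)^k = (-1)^k * (1-p)^k := by
      rw [show (p-1) = (-1)*(1-p) by ring, mul_pow]
    have habk : a + b + (k:ℂ) = 2*(lam:ℂ) + (k:ℂ) := by rw [hab]
    rw [habk, hneg', hsplit, hq]
    field_simp [hBk, fact_ne n, fact_ne k, fact_ne (n-k)]
  calc mpP n lam φ x
      = pochC (2*(lam:ℂ)) n / (n.factorial : ℂ) * Complex.exp ((n : ℂ) * φ * I) *
        ∑ k ∈ range (n+1), pochC (-(n:ℂ)) k * pochC a k / (pochC (2*(lam:ℂ)) k * (k.factorial:ℂ)) * (1 - p)^k := by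
        rw [mpP]
    _ = Complex.exp ((n:ℂ) * φ * I) * Sfn n a b p := by rw [← key]; ring

lemma swap2 (K J : ℕ) (f : ℕ → ℕ → ℂ) :
    ∑ k ∈ range (K+1), ∑ h ∈ Ico k (J+1), f k h
      = ∑ h ∈ range (J+1), ∑ k ∈ range (min K h + 1), f k h := by
  have e1 : ∀ k : ℕ, Ico k (J+1) = (range (J+1)).filter (fun h => k ≤ h) := by
    intro k; ext h; simp only [mem_Ico, mem_range, mem_filter]; omega
  calc ∑ k ∈ range (K+1), ∑ h ∈ Ico k (J+1), f k h
      = ∑ k ∈ range (K+1), ∑ h ∈ range (J+1), if k ≤ h then f k h else 0 := by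
        refine Finset.sum_congr rfl fun k _ => ?_
        rw [e1 k, Finset.sum_filter]
    _ = ∑ h ∈ range (J+1), ∑ k ∈ range (K+1), if k ≤ h then f k h else 0 := Finset.sum_comm
    _ = ∑ h ∈ range (J+1), ∑ k ∈ range (min K h + 1), f k h := by
        refine Finset.sum_congr rfl fun h _ => ?_
        rw [← Finset.sum_filter]
        refine Finset.sum_congr ?_ fun k _ => rfl
        ext k; simp only [mem_filter, mem_range]; omega

lemma claimh (a : ℂ) (i j h : ℕ) (hj : h ≤ j) :
    ∑ k ∈ range (min (min i j) h + 1),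
      pochC a k * pochC (a+(k:ℂ)) (i-k) * pochC (a+(k:ℂ)) (h-k)
        / ((k.factorial:ℂ) * ((i-k).factorial:ℂ) * ((h-k).factorial:ℂ))
    = pochC a i * pochC (a+(i:ℂ)) h / ((i.factorial:ℂ) * (h.factorial:ℂ)) := by
  calc ∑ k ∈ range (min (min i j) h + 1),
      pochC a k * pochC (a+(k:ℂ)) (i-k) * pochC (a+(k:ℂ)) (h-k)
        / ((k.factorial:ℂ) * ((i-k).factorial:ℂ) * ((h-k).factorial:ℂ))
      = ∑ k ∈ range (min (min i j) h + 1),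
          ((i.choose k : ℂ) * (h.choose k : ℂ) * (k.factorial : ℂ) * pochC (a+(k:ℂ)) (h-k))
          * (pochC a i / ((i.factorial:ℂ) * (h.factorial:ℂ))) := by
        refine Finset.sum_congr rfl fun k hk => ?_
        rw [mem_range] at hk
        have hki : k ≤ i := by omega
        have hkh : k ≤ h := by omega
        have hsplit : pochC a i = pochC a k * pochC (a+(k:ℂ)) (i-k) := by
          calc pochC a i = pochC a (k + (i-k)) := by rw [show k + (i-k) = i by omega]
            _ = _ := pochC_add a k (i-k)
        have hci : ((i.choose k : ℕ) : ℂ) * (k.factorial : ℂ) * ((i-k).factorial : ℂ) = (i.factorial : ℂ) := by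
          exact_mod_cast congrArg (fun t : ℕ => (t:ℂ)) (Nat.choose_mul_factorial_mul_factorial hki)
        have hch : ((h.choose k : ℕ) : ℂ) * (k.factorial : ℂ) * ((h-k).factorial : ℂ) = (h.factorial : ℂ) := by
          exact_mod_cast congrArg (fun t : ℕ => (t:ℂ)) (Nat.choose_mul_factorial_mul_factorial hkh)
        rw [hsplit, ← mul_div_assoc, div_eq_div_iff
          (mul_ne_zero (mul_ne_zero (fact_ne k) (fact_ne (i-k))) (fact_ne (h-k)))
          (mul_ne_zero (fact_ne i) (fact_ne h)), ← hci, ← hch]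
        ring
    _ = ∑ k ∈ range (h+1),
          ((i.choose k : ℂ) * (h.choose k : ℂ) * (k.factorial : ℂ) * pochC (a+(k:ℂ)) (h-k))
          * (pochC a i / ((i.factorial:ℂ) * (h.factorial:ℂ))) := by
        refine Finset.sum_subset ?_ ?_
        · intro k hk; rw [mem_range] at hk ⊢; omega
        · intro k hk1 hk2
          rw [mem_range] at hk1 hk2
          have : i < k := by omega
          rw [Nat.choose_eq_zero_of_lt this]
          simp
    _ = pochC a i * pochC (a+(i:ℂ)) h / ((i.factorial:ℂ) * (h.factorial:ℂ)) := by
        rw [← Finset.sum_mul, Rlem h a i]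
        ring

lemma Pkey (a p : ℂ) (i j : ℕ) :
    ∑ k ∈ range (min i j + 1),
      pochC a k * (p^2-p)^k / (k.factorial : ℂ)
      * (pochC (a+(k:ℂ)) (i-k) * p^(i-k) / ((i-k).factorial : ℂ)
        * ∑ l ∈ range ((j-k)+1), pochC (a+(k:ℂ)) l * p^l * pochC ((k:ℂ)+((i-k:ℕ):ℂ)) ((j-k)-l)
            / ((l.factorial : ℂ) * (((j-k)-l).factorial : ℂ)))
    = pochC a (i+j) * p^(i+j) / ((i.factorial : ℂ) * (j.factorial : ℂ)) := by
  have hp : ∀ l : ℕ, p^l = ∑ e ∈ range (l+1), (p-1)^e * (l.choose e : ℂ) := by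
    intro l
    have h := add_pow (p-1) 1 l
    rw [sub_add_cancel] at h
    simpa using h
  calc ∑ k ∈ range (min i j + 1),
      pochC a k * (p^2-p)^k / (k.factorial : ℂ)
      * (pochC (a+(k:ℂ)) (i-k) * p^(i-k) / ((i-k).factorial : ℂ)
        * ∑ l ∈ range ((j-k)+1), pochC (a+(k:ℂ)) l * p^l * pochC ((k:ℂ)+((i-k:ℕ):ℂ)) ((j-k)-l)
            / ((l.factorial : ℂ) * (((j-k)-l).factorial : ℂ)))
      = ∑ k ∈ range (min i j + 1), ∑ l ∈ range ((j-k)+1), ∑ e ∈ range (l+1),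
          (p-1)^e * (l.choose e : ℂ)
          * (pochC a k * (p^2-p)^k * pochC (a+(k:ℂ)) (i-k) * p^(i-k)
              * pochC (a+(k:ℂ)) l * pochC (i:ℂ) ((j-k)-l))
          / ((k.factorial:ℂ) * ((i-k).factorial:ℂ) * (l.factorial:ℂ) * (((j-k)-l).factorial:ℂ)) := by
        refine Finset.sum_congr rfl fun k hk => ?_
        rw [mem_range] at hk
        have hki : k ≤ i := by omega
        have hbase : (k:ℂ)+((i-k:ℕ):ℂ) = (i:ℂ) := by
          push_cast [Nat.cast_sub hki]; ring
        rw [hbase]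
        simp only [Finset.mul_sum]
        refine Finset.sum_congr rfl fun l hl => ?_
        rw [hp l]
        simp only [Finset.mul_sum, Finset.sum_mul, Finset.sum_div]
        exact Finset.sum_congr rfl fun e he => by ring
    _ = ∑ k ∈ range (min i j + 1), ∑ e ∈ range ((j-k)+1), ∑ d ∈ range ((j-k)-e+1),
          (p-1)^e * ((e+d).choose e : ℂ)
          * (pochC a k * (p^2-p)^k * pochC (a+(k:ℂ)) (i-k) * p^(i-k)
              * pochC (a+(k:ℂ)) (e+d) * pochC (i:ℂ) ((j-k)-(e+d)))
          / ((k.factorial:ℂ) * ((i-k).factorial:ℂ) * ((e+d).factorial:ℂ) * (((j-k)-(e+d)).factorial:ℂ)) := by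
        refine Finset.sum_congr rfl fun k hk => ?_
        exact tri_swap (fun e l =>
          (p-1)^e * (l.choose e : ℂ)
          * (pochC a k * (p^2-p)^k * pochC (a+(k:ℂ)) (i-k) * p^(i-k)
              * pochC (a+(k:ℂ)) l * pochC (i:ℂ) ((j-k)-l))
          / ((k.factorial:ℂ) * ((i-k).factorial:ℂ) * (l.factorial:ℂ) * (((j-k)-l).factorial:ℂ))) (j-k)
    _ = ∑ k ∈ range (min i j + 1), ∑ e ∈ range ((j-k)+1),
          ((p-1)^e
            * (pochC a k * (p^2-p)^k * pochC (a+(k:ℂ)) (i-k) * p^(i-k) * pochC (a+(k:ℂ)) e)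
            / ((k.factorial:ℂ) * ((i-k).factorial:ℂ) * (e.factorial:ℂ)))
          * (pochC ((a+(k:ℂ)+(e:ℂ)) + (i:ℂ)) ((j-k)-e) / ((((j-k)-e).factorial:ℂ))) := by
        refine Finset.sum_congr rfl fun k hk => Finset.sum_congr rfl fun e he => ?_
        calc ∑ d ∈ range ((j-k)-e+1),
            (p-1)^e * ((e+d).choose e : ℂ)
            * (pochC a k * (p^2-p)^k * pochC (a+(k:ℂ)) (i-k) * p^(i-k)
                * pochC (a+(k:ℂ)) (e+d) * pochC (i:ℂ) ((j-k)-(e+d)))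
            / ((k.factorial:ℂ) * ((i-k).factorial:ℂ) * ((e+d).factorial:ℂ) * (((j-k)-(e+d)).factorial:ℂ))
            = ∑ d ∈ range ((j-k)-e+1),
                ((p-1)^e
                  * (pochC a k * (p^2-p)^k * pochC (a+(k:ℂ)) (i-k) * p^(i-k) * pochC (a+(k:ℂ)) e)
                  / ((k.factorial:ℂ) * ((i-k).factorial:ℂ) * (e.factorial:ℂ)))
                * (pochC (a+(k:ℂ)+(e:ℂ)) d * pochC (i:ℂ) (((j-k)-e)-d)
                    / ((d.factorial:ℂ) * ((((j-k)-e)-d).factorial:ℂ))) := by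
              refine Finset.sum_congr rfl fun d hd => ?_
              have eM : (j-k)-(e+d) = ((j-k)-e)-d := by omega
              have hsplit : pochC (a+(k:ℂ)) (e+d) = pochC (a+(k:ℂ)) e * pochC (a+(k:ℂ)+(e:ℂ)) d :=
                pochC_add (a+(k:ℂ)) e d
              have hsym : (e+d).choose e = (e+d).choose d := by
                have h2 := Nat.choose_symm (Nat.le_add_right e d)
                simpa using h2.symm
              have hfac : (((e+d).choose d : ℕ) : ℂ) * (e.factorial : ℂ) * (d.factorial : ℂ)
                  = ((e+d).factorial : ℂ) := by
                exact_mod_cast congrArg (fun t : ℕ => (t : ℂ)) (Nat.add_choose_mul_factorial_mul_factorial e d)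
              rw [eM, hsplit, hsym, div_mul_div_comm,
                div_eq_div_iff
                  (by exact mul_ne_zero (mul_ne_zero (mul_ne_zero (fact_ne k) (fact_ne (i-k))) (fact_ne (e+d))) (fact_ne (((j-k)-e)-d)))
                  (by exact mul_ne_zero (mul_ne_zero (mul_ne_zero (fact_ne k) (fact_ne (i-k))) (fact_ne e)) (mul_ne_zero (fact_ne d) (fact_ne (((j-k)-e)-d)))),
                ← hfac]
              ring
          _ = ((p-1)^e
                * (pochC a k * (p^2-p)^k * pochC (a+(k:ℂ)) (i-k) * p^(i-k) * pochC (a+(k:ℂ)) e)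
                / ((k.factorial:ℂ) * ((i-k).factorial:ℂ) * (e.factorial:ℂ)))
              * (pochC ((a+(k:ℂ)+(e:ℂ)) + (i:ℂ)) ((j-k)-e) / ((((j-k)-e).factorial:ℂ))) := by
              rw [← Finset.mul_sum, vand_div (a+(k:ℂ)+(e:ℂ)) (i:ℂ) ((j-k)-e)]
    _ = ∑ k ∈ range (min i j + 1), ∑ h ∈ Ico k (j+1),
          ((p-1)^(h-k)
            * (pochC a k * (p^2-p)^k * pochC (a+(k:ℂ)) (i-k) * p^(i-k) * pochC (a+(k:ℂ)) (h-k))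
            / ((k.factorial:ℂ) * ((i-k).factorial:ℂ) * ((h-k).factorial:ℂ)))
          * (pochC (a+(h:ℂ)+(i:ℂ)) (j-h) / (((j-h).factorial:ℂ))) := by
        refine Finset.sum_congr rfl fun k hk => ?_
        rw [mem_range] at hk
        have hkj : k ≤ j := by omega
        rw [Finset.sum_Ico_eq_sum_range]
        rw [show j+1-k = (j-k)+1 by omega]
        refine Finset.sum_congr rfl fun e he => ?_
        rw [mem_range] at he
        have e1 : k + e - k = e := by omega
        have e2 : j - (k+e) = (j-k) - e := by omega
        have e3 : a + ((k+e:ℕ):ℂ) + (i:ℂ) = a + (k:ℂ) + (e:ℂ) + (i:ℂ) := by push_cast; ring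
        rw [e1, e2, e3]
    _ = ∑ h ∈ range (j+1), ∑ k ∈ range (min (min i j) h + 1),
          ((p-1)^(h-k)
            * (pochC a k * (p^2-p)^k * pochC (a+(k:ℂ)) (i-k) * p^(i-k) * pochC (a+(k:ℂ)) (h-k))
            / ((k.factorial:ℂ) * ((i-k).factorial:ℂ) * ((h-k).factorial:ℂ)))
          * (pochC (a+(h:ℂ)+(i:ℂ)) (j-h) / (((j-h).factorial:ℂ))) :=
        swap2 (min i j) j _
    _ = ∑ h ∈ range (j+1),
          (p^i * (p-1)^h * pochC (a+(h:ℂ)+(i:ℂ)) (j-h) / (((j-h).factorial:ℂ)))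
          * (pochC a i * pochC (a+(i:ℂ)) h / ((i.factorial:ℂ) * (h.factorial:ℂ))) := by
        refine Finset.sum_congr rfl fun h hh => ?_
        rw [mem_range] at hh
        have hhj : h ≤ j := by omega
        calc ∑ k ∈ range (min (min i j) h + 1),
            ((p-1)^(h-k)
              * (pochC a k * (p^2-p)^k * pochC (a+(k:ℂ)) (i-k) * p^(i-k) * pochC (a+(k:ℂ)) (h-k))
              / ((k.factorial:ℂ) * ((i-k).factorial:ℂ) * ((h-k).factorial:ℂ)))
            * (pochC (a+(h:ℂ)+(i:ℂ)) (j-h) / (((j-h).factorial:ℂ)))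
            = ∑ k ∈ range (min (min i j) h + 1),
                (p^i * (p-1)^h * pochC (a+(h:ℂ)+(i:ℂ)) (j-h) / (((j-h).factorial:ℂ)))
                * (pochC a k * pochC (a+(k:ℂ)) (i-k) * pochC (a+(k:ℂ)) (h-k)
                    / ((k.factorial:ℂ) * ((i-k).factorial:ℂ) * ((h-k).factorial:ℂ))) := by
              refine Finset.sum_congr rfl fun k hk => ?_
              rw [mem_range] at hk
              have hki : k ≤ i := by omega
              have hkh : k ≤ h := by omega
              have hsc : (p-1)^(h-k) * ((p^2-p)^k * p^(i-k)) = p^i * (p-1)^h := by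
                rw [show p^2-p = p*(p-1) by ring, mul_pow]
                calc (p-1)^(h-k) * ((p^k * (p-1)^k) * p^(i-k))
                    = (p^k * p^(i-k)) * ((p-1)^k * (p-1)^(h-k)) := by ring
                  _ = p^i * (p-1)^h := by
                      rw [← pow_add, ← pow_add, show k+(i-k)=i by omega, show k+(h-k)=h by omega]
              linear_combination (pochC a k * pochC (a+(k:ℂ)) (i-k) * pochC (a+(k:ℂ)) (h-k)
                * pochC (a+(h:ℂ)+(i:ℂ)) (j-h)
                / ((k.factorial:ℂ) * ((i-k).factorial:ℂ) * ((h-k).factorial:ℂ) * ((j-h).factorial:ℂ))) * hsc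
          _ = (p^i * (p-1)^h * pochC (a+(h:ℂ)+(i:ℂ)) (j-h) / (((j-h).factorial:ℂ)))
              * (pochC a i * pochC (a+(i:ℂ)) h / ((i.factorial:ℂ) * (h.factorial:ℂ))) := by
              rw [← Finset.mul_sum, claimh a i j h hhj]
    _ = pochC a (i+j) * p^(i+j) / ((i.factorial : ℂ) * (j.factorial : ℂ)) := by
        rw [pochC_add a i j, pow_add p i j, hp j]
        simp only [Finset.mul_sum, Finset.sum_mul, Finset.sum_div]
        refine Finset.sum_congr rfl fun h hh => ?_
        rw [mem_range] at hh
        have hhj : h ≤ j := by omega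
        have hsplit : pochC (a+(i:ℂ)) j = pochC (a+(i:ℂ)) h * pochC (a+(i:ℂ)+(h:ℂ)) (j-h) := by
          calc pochC (a+(i:ℂ)) j = pochC (a+(i:ℂ)) (h + (j-h)) := by rw [show h+(j-h) = j by omega]
            _ = _ := pochC_add (a+(i:ℂ)) h (j-h)
        have hbase : a + (i:ℂ) + (h:ℂ) = a + (h:ℂ) + (i:ℂ) := by ring
        have hcj : ((j.choose h : ℕ) : ℂ) * (h.factorial : ℂ) * ((j-h).factorial : ℂ)
            = (j.factorial : ℂ) := by
          exact_mod_cast congrArg (fun t : ℕ => (t : ℂ)) (Nat.choose_mul_factorial_mul_factorial hhj)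
        rw [hsplit, hbase, div_mul_div_comm,
          div_eq_div_iff
            (by exact mul_ne_zero (fact_ne (j-h)) (mul_ne_zero (fact_ne i) (fact_ne h)))
            (by exact mul_ne_zero (fact_ne i) (fact_ne j)),
          ← hcj]
        ring

lemma L1 (a b p : ℂ) (n m : ℕ) :
    (((n+m).choose n : ℕ) : ℂ) * Sfn (n+m) a b p
    = ∑ i ∈ range (n+1), ∑ j ∈ range (m+1),
        pochC a (i+j) * p^(i+j) / ((i.factorial:ℂ) * (j.factorial:ℂ))
        * (pochC b ((n-i)+(m-j)) / (((n-i).factorial:ℂ) * ((m-j).factorial:ℂ))) := by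
  have vandN : ∀ r : ℕ, r ≤ n+m → ((n+m).choose n : ℕ) = ∑ i ∈ range (n+1), (r.choose i) * ((n+m-r).choose (n-i)) := by
    intro r hr
    have h1 := Nat.add_choose_eq r (n+m-r) n
    rw [show r + (n+m-r) = n+m by omega] at h1
    rw [h1, Finset.Nat.sum_antidiagonal_eq_sum_range_succ_mk]
  calc (((n+m).choose n : ℕ) : ℂ) * Sfn (n+m) a b p
      = ∑ r ∈ range (n+m+1), ∑ i ∈ range (n+1),
          ((r.choose i : ℕ):ℂ) * (((n+m-r).choose (n-i) : ℕ):ℂ)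
          * (pochC a r * pochC b (n+m-r) * p^r / ((r.factorial:ℂ) * ((n+m-r).factorial:ℂ))) := by
        rw [Sfn, Finset.mul_sum]
        refine Finset.sum_congr rfl fun r hr => ?_
        rw [mem_range] at hr
        rw [show (((n+m).choose n : ℕ) : ℂ) = ∑ i ∈ range (n+1),
            ((r.choose i : ℕ):ℂ) * (((n+m-r).choose (n-i) : ℕ):ℂ) from by
          rw [vandN r (by omega)]; push_cast; ring]
        rw [Finset.sum_mul]
    _ = ∑ i ∈ range (n+1), ∑ r ∈ range (n+m+1),
          ((r.choose i : ℕ):ℂ) * (((n+m-r).choose (n-i) : ℕ):ℂ)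
          * (pochC a r * pochC b (n+m-r) * p^r / ((r.factorial:ℂ) * ((n+m-r).factorial:ℂ))) :=
        Finset.sum_comm
    _ = ∑ i ∈ range (n+1), ∑ j ∈ range (m+1),
        pochC a (i+j) * p^(i+j) / ((i.factorial:ℂ) * (j.factorial:ℂ))
        * (pochC b ((n-i)+(m-j)) / (((n-i).factorial:ℂ) * ((m-j).factorial:ℂ))) := by
        refine Finset.sum_congr rfl fun i hi => ?_
        rw [mem_range] at hi
        have hin : i ≤ n := by omega
        have shrink : ∑ r ∈ range (n+m+1),
            ((r.choose i : ℕ):ℂ) * (((n+m-r).choose (n-i) : ℕ):ℂ)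
            * (pochC a r * pochC b (n+m-r) * p^r / ((r.factorial:ℂ) * ((n+m-r).factorial:ℂ)))
            = ∑ r ∈ Ico i (i+m+1),
            ((r.choose i : ℕ):ℂ) * (((n+m-r).choose (n-i) : ℕ):ℂ)
            * (pochC a r * pochC b (n+m-r) * p^r / ((r.factorial:ℂ) * ((n+m-r).factorial:ℂ))) := by
          symm
          refine Finset.sum_subset ?_ ?_
          · intro r hr; rw [mem_Ico] at hr; rw [mem_range]; omega
          · intro r hr1 hr2
            rw [mem_range] at hr1; rw [mem_Ico] at hr2
            rcases Nat.lt_or_ge r i with hlt | hge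
            · rw [Nat.choose_eq_zero_of_lt hlt]; simp
            · have : n+m-r < n-i := by omega
              rw [Nat.choose_eq_zero_of_lt this]; simp
        rw [shrink, Finset.sum_Ico_eq_sum_range, show i+m+1-i = m+1 by omega]
        refine Finset.sum_congr rfl fun j hj => ?_
        rw [mem_range] at hj
        have hjm : j ≤ m := by omega
        have e1 : n+m-(i+j) = (n-i)+(m-j) := by omega
        have hsym1 : (i+j).choose i = (i+j).choose j := by
          have h2 := Nat.choose_symm (Nat.le_add_right i j)
          simpa using h2.symm
        have hfac1 : (((i+j).choose j : ℕ) : ℂ) * (i.factorial : ℂ) * (j.factorial : ℂ)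
            = ((i+j).factorial : ℂ) := by
          exact_mod_cast congrArg (fun t : ℕ => (t : ℂ)) (Nat.add_choose_mul_factorial_mul_factorial i j)
        have hfac2 : ((((n-i)+(m-j)).choose (m-j) : ℕ) : ℂ) * ((n-i).factorial : ℂ) * ((m-j).factorial : ℂ)
            = (((n-i)+(m-j)).factorial : ℂ) := by
          exact_mod_cast congrArg (fun t : ℕ => (t : ℂ)) (Nat.add_choose_mul_factorial_mul_factorial (n-i) (m-j))
        have hsym2 : ((n-i)+(m-j)).choose (n-i) = ((n-i)+(m-j)).choose (m-j) := by
          have h2 := Nat.choose_symm (Nat.le_add_right (n-i) (m-j))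
          simpa using h2.symm
        have d1 : ((i+j).factorial:ℂ) * (((n-i)+(m-j)).factorial:ℂ) ≠ 0 :=
          mul_ne_zero (fact_ne (i+j)) (fact_ne ((n-i)+(m-j)))
        have d2 : (i.factorial:ℂ) * (j.factorial:ℂ) * ((((n-i)).factorial:ℂ) * ((m-j).factorial:ℂ)) ≠ 0 :=
          mul_ne_zero (mul_ne_zero (fact_ne i) (fact_ne j)) (mul_ne_zero (fact_ne (n-i)) (fact_ne (m-j)))
        rw [e1, hsym1, hsym2, div_mul_div_comm, ← mul_div_assoc,
          div_eq_div_iff d1 d2, ← hfac1, ← hfac2]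
        ring

lemma swap3 (n m : ℕ) (F : ℕ → ℕ → ℕ → ℂ) (W : ℕ → ℕ → ℂ) :
    ∑ i ∈ range (n+1), ∑ j ∈ range (m+1),
      (∑ k ∈ range (min i j + 1), F k (i-k) (j-k)) * W (n-i) (m-j)
    = ∑ k ∈ range (min n m + 1), ∑ i ∈ range ((n-k)+1), ∑ j ∈ range ((m-k)+1),
        F k i j * W ((n-k)-i) ((m-k)-j) := by
  calc ∑ i ∈ range (n+1), ∑ j ∈ range (m+1),
      (∑ k ∈ range (min i j + 1), F k (i-k) (j-k)) * W (n-i) (m-j)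
      = ∑ i ∈ range (n+1), ∑ j ∈ range (m+1), ∑ k ∈ range (min n m + 1),
          if k ≤ i ∧ k ≤ j then F k (i-k) (j-k) * W (n-i) (m-j) else 0 := by
        refine Finset.sum_congr rfl fun i hi => Finset.sum_congr rfl fun j hj => ?_
        rw [mem_range] at hi hj
        rw [Finset.sum_mul, ← Finset.sum_filter]
        refine Finset.sum_congr ?_ fun k _ => rfl
        ext k; simp only [mem_filter, mem_range]; omega
    _ = ∑ i ∈ range (n+1), ∑ k ∈ range (min n m + 1), ∑ j ∈ range (m+1),
          if k ≤ i ∧ k ≤ j then F k (i-k) (j-k) * W (n-i) (m-j) else 0 :=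
        Finset.sum_congr rfl fun i _ => Finset.sum_comm
    _ = ∑ k ∈ range (min n m + 1), ∑ i ∈ range (n+1), ∑ j ∈ range (m+1),
          if k ≤ i ∧ k ≤ j then F k (i-k) (j-k) * W (n-i) (m-j) else 0 :=
        Finset.sum_comm
    _ = ∑ k ∈ range (min n m + 1), ∑ i ∈ range ((n-k)+1), ∑ j ∈ range ((m-k)+1),
        F k i j * W ((n-k)-i) ((m-k)-j) := by
        refine Finset.sum_congr rfl fun k hk => ?_
        rw [mem_range] at hk
        have hkn : k ≤ n := by omega
        have hkm : k ≤ m := by omega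
        calc ∑ i ∈ range (n+1), ∑ j ∈ range (m+1),
            (if k ≤ i ∧ k ≤ j then F k (i-k) (j-k) * W (n-i) (m-j) else 0)
            = ∑ i ∈ range (n+1), if k ≤ i then
                (∑ j ∈ range (m+1), if k ≤ j then F k (i-k) (j-k) * W (n-i) (m-j) else 0) else 0 := by
              refine Finset.sum_congr rfl fun i _ => ?_
              by_cases hki : k ≤ i
              · simp only [hki, if_true, true_and]
              · simp only [hki, if_false, false_and]
                simp
            _ = ∑ i ∈ range ((n-k)+1), ∑ j ∈ range (m+1),
                if k ≤ j then F k i (j-k) * W ((n-k)-i) (m-j) else 0 := by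
              rw [← Finset.sum_filter, show (range (n+1)).filter (fun i => k ≤ i) = Ico k (n+1) from by
                ext t; simp only [mem_filter, mem_range, mem_Ico]; omega,
                Finset.sum_Ico_eq_sum_range, show n+1-k = (n-k)+1 by omega]
              refine Finset.sum_congr rfl fun i hi => ?_
              rw [mem_range] at hi
              rw [show k+i-k = i by omega, show n-(k+i) = (n-k)-i by omega]
            _ = ∑ i ∈ range ((n-k)+1), ∑ j ∈ range ((m-k)+1),
                F k i j * W ((n-k)-i) ((m-k)-j) := by
              refine Finset.sum_congr rfl fun i hi => ?_
              rw [← Finset.sum_filter, show (range (m+1)).filter (fun j => k ≤ j) = Ico k (m+1) from by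
                ext t; simp only [mem_filter, mem_range, mem_Ico]; omega,
                Finset.sum_Ico_eq_sum_range, show m+1-k = (m-k)+1 by omega]
              refine Finset.sum_congr rfl fun j hj => ?_
              rw [show k+j-k = j by omega, show m-(k+j) = (m-k)-j by omega]

lemma Fk (a b p : ℂ) (n m k : ℕ) (hkn : k ≤ n) (hkm : k ≤ m) :
    ∑ i ∈ range (n-k+1), ∑ j ∈ range (m-k+1),
      (pochC (a+(k:ℂ)) i * p^i / (i.factorial : ℂ)
        * ∑ l ∈ range (j+1), pochC (a+(k:ℂ)) l * p^l * pochC ((k:ℂ)+(i:ℂ)) (j-l)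
            / ((l.factorial : ℂ) * ((j-l).factorial : ℂ)))
      * (pochC b ((n-k-i)+(m-k-j)) / (((n-k-i).factorial : ℂ) * ((m-k-j).factorial : ℂ)))
    = Sfn (n-k) (a+(k:ℂ)) b p * Sfn (m-k) (a+(k:ℂ)) (b+(n:ℂ)) p := by
  set N := n - k with hN
  set M := m - k with hM
  have main : ∀ i ∈ range (N+1),
      (∑ j ∈ range (M+1),
        (pochC (a+(k:ℂ)) i * p^i / (i.factorial : ℂ)
          * ∑ l ∈ range (j+1), pochC (a+(k:ℂ)) l * p^l * pochC ((k:ℂ)+(i:ℂ)) (j-l)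
              / ((l.factorial : ℂ) * ((j-l).factorial : ℂ)))
        * (pochC b ((N-i)+(M-j)) / (((N-i).factorial : ℂ) * ((M-j).factorial : ℂ))))
      = (pochC (a+(k:ℂ)) i * pochC b (N-i) * p^i / ((i.factorial:ℂ) * ((N-i).factorial:ℂ)))
        * Sfn M (a+(k:ℂ)) (b+(n:ℂ)) p := by
    intro i hi
    rw [mem_range] at hi
    have hiN : i ≤ N := by omega
    calc ∑ j ∈ range (M+1),
        (pochC (a+(k:ℂ)) i * p^i / (i.factorial : ℂ)
          * ∑ l ∈ range (j+1), pochC (a+(k:ℂ)) l * p^l * pochC ((k:ℂ)+(i:ℂ)) (j-l)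
              / ((l.factorial : ℂ) * ((j-l).factorial : ℂ)))
        * (pochC b ((N-i)+(M-j)) / (((N-i).factorial : ℂ) * ((M-j).factorial : ℂ)))
        = ∑ j ∈ range (M+1), ∑ l ∈ range (j+1),
            pochC (a+(k:ℂ)) i * p^i / (i.factorial : ℂ)
            * (pochC (a+(k:ℂ)) l * p^l * pochC ((k:ℂ)+(i:ℂ)) (j-l)
                / ((l.factorial : ℂ) * ((j-l).factorial : ℂ))
              * (pochC b ((N-i)+(M-j)) / (((N-i).factorial : ℂ) * ((M-j).factorial : ℂ)))) := by
          refine Finset.sum_congr rfl fun j hj => ?_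
          rw [Finset.mul_sum, Finset.sum_mul]
          exact Finset.sum_congr rfl fun l hl => by ring
      _ = pochC (a+(k:ℂ)) i * p^i / (i.factorial : ℂ)
          * ∑ j ∈ range (M+1), ∑ l ∈ range (j+1),
              pochC (a+(k:ℂ)) l * p^l * pochC ((k:ℂ)+(i:ℂ)) (j-l)
                / ((l.factorial : ℂ) * ((j-l).factorial : ℂ))
              * (pochC b ((N-i)+(M-j)) / (((N-i).factorial : ℂ) * ((M-j).factorial : ℂ))) := by
          rw [Finset.mul_sum]
          exact Finset.sum_congr rfl fun j hj => by rw [Finset.mul_sum]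
      _ = pochC (a+(k:ℂ)) i * p^i / (i.factorial : ℂ)
          * ∑ l ∈ range (M+1), ∑ d ∈ range (M-l+1),
              pochC (a+(k:ℂ)) l * p^l * pochC ((k:ℂ)+(i:ℂ)) ((l+d)-l)
                / ((l.factorial : ℂ) * (((l+d)-l).factorial : ℂ))
              * (pochC b ((N-i)+(M-(l+d))) / (((N-i).factorial : ℂ) * ((M-(l+d)).factorial : ℂ))) := by
          rw [tri_swap (fun l j =>
            pochC (a+(k:ℂ)) l * p^l * pochC ((k:ℂ)+(i:ℂ)) (j-l)
                / ((l.factorial : ℂ) * ((j-l).factorial : ℂ))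
              * (pochC b ((N-i)+(M-j)) / (((N-i).factorial : ℂ) * ((M-j).factorial : ℂ)))) M]
      _ = pochC (a+(k:ℂ)) i * p^i / (i.factorial : ℂ)
          * ∑ l ∈ range (M+1),
              (pochC (a+(k:ℂ)) l * p^l * pochC b (N-i) / ((l.factorial : ℂ) * ((N-i).factorial : ℂ)))
              * (pochC (((k:ℂ)+(i:ℂ)) + (b + ((N-i : ℕ):ℂ))) (M-l) / (((M-l).factorial : ℂ))) := by
          congr 1
          refine Finset.sum_congr rfl fun l hl => ?_
          rw [mem_range] at hl
          have hlM : l ≤ M := by omega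
          rw [← vand_div ((k:ℂ)+(i:ℂ)) (b + ((N-i : ℕ):ℂ)) (M-l), Finset.mul_sum]
          refine Finset.sum_congr rfl fun d hd => ?_
          rw [mem_range] at hd
          have e1 : (l+d) - l = d := by omega
          have e2 : M - (l+d) = (M-l) - d := by omega
          rw [e1, e2, pochC_add b (N-i) ((M-l)-d)]
          ring
      _ = (pochC (a+(k:ℂ)) i * pochC b (N-i) * p^i / ((i.factorial:ℂ) * ((N-i).factorial:ℂ)))
          * Sfn M (a+(k:ℂ)) (b+(n:ℂ)) p := by
          have hbase : ((k:ℂ)+(i:ℂ)) + (b + ((N-i : ℕ):ℂ)) = b + (n:ℂ) := by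
            have c1 : ((N - i : ℕ):ℂ) = ((N:ℕ):ℂ) - (i:ℂ) := by
              push_cast [Nat.cast_sub hiN]; ring
            have c2 : ((N:ℕ):ℂ) = (n:ℂ) - (k:ℂ) := by
              rw [hN]; push_cast [Nat.cast_sub hkn]; ring
            rw [c1, c2]; ring
          rw [hbase, Sfn, Finset.mul_sum, Finset.mul_sum]
          refine Finset.sum_congr rfl fun l hl => ?_
          ring
  calc ∑ i ∈ range (N+1), ∑ j ∈ range (M+1),
      (pochC (a+(k:ℂ)) i * p^i / (i.factorial : ℂ)
        * ∑ l ∈ range (j+1), pochC (a+(k:ℂ)) l * p^l * pochC ((k:ℂ)+(i:ℂ)) (j-l)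
            / ((l.factorial : ℂ) * ((j-l).factorial : ℂ)))
      * (pochC b ((N-i)+(M-j)) / (((N-i).factorial : ℂ) * ((M-j).factorial : ℂ)))
      = ∑ i ∈ range (N+1),
          (pochC (a+(k:ℂ)) i * pochC b (N-i) * p^i / ((i.factorial:ℂ) * ((N-i).factorial:ℂ)))
          * Sfn M (a+(k:ℂ)) (b+(n:ℂ)) p := Finset.sum_congr rfl main
    _ = Sfn N (a+(k:ℂ)) b p * Sfn M (a+(k:ℂ)) (b+(n:ℂ)) p := by
        simp only [Sfn]
        rw [Finset.sum_mul]

theorem star (a b p : ℂ) (n m : ℕ) :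
    (((n+m).choose n : ℕ) : ℂ) * Sfn (n+m) a b p
    = ∑ k ∈ range (min n m + 1),
        pochC a k * (p^2-p)^k / (k.factorial : ℂ)
          * Sfn (n-k) (a+(k:ℂ)) b p * Sfn (m-k) (a+(k:ℂ)) (b+(n:ℂ)) p := by
  rw [L1 a b p n m]
  calc ∑ i ∈ range (n+1), ∑ j ∈ range (m+1),
        pochC a (i+j) * p^(i+j) / ((i.factorial:ℂ) * (j.factorial:ℂ))
        * (pochC b ((n-i)+(m-j)) / (((n-i).factorial:ℂ) * ((m-j).factorial:ℂ)))
      = ∑ i ∈ range (n+1), ∑ j ∈ range (m+1),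
        (∑ k ∈ range (min i j + 1),
          pochC a k * (p^2-p)^k / (k.factorial : ℂ)
          * (pochC (a+(k:ℂ)) (i-k) * p^(i-k) / ((i-k).factorial : ℂ)
            * ∑ l ∈ range ((j-k)+1), pochC (a+(k:ℂ)) l * p^l * pochC ((k:ℂ)+((i-k:ℕ):ℂ)) ((j-k)-l)
                / ((l.factorial : ℂ) * (((j-k)-l).factorial : ℂ))))
        * (pochC b ((n-i)+(m-j)) / (((n-i).factorial:ℂ) * ((m-j).factorial:ℂ))) := by
        refine Finset.sum_congr rfl fun i _ => Finset.sum_congr rfl fun j _ => ?_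
        rw [Pkey a p i j]
    _ = ∑ k ∈ range (min n m + 1), ∑ i ∈ range ((n-k)+1), ∑ j ∈ range ((m-k)+1),
        (pochC a k * (p^2-p)^k / (k.factorial : ℂ)
          * (pochC (a+(k:ℂ)) i * p^i / (i.factorial : ℂ)
            * ∑ l ∈ range (j+1), pochC (a+(k:ℂ)) l * p^l * pochC ((k:ℂ)+((i:ℕ):ℂ)) (j-l)
                / ((l.factorial : ℂ) * ((j-l).factorial : ℂ))))
        * (pochC b (((n-k)-i)+((m-k)-j)) / ((((n-k)-i).factorial:ℂ) * (((m-k)-j).factorial:ℂ))) :=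
        swap3 n m (fun k u v =>
          pochC a k * (p^2-p)^k / (k.factorial : ℂ)
          * (pochC (a+(k:ℂ)) u * p^u / (u.factorial : ℂ)
            * ∑ l ∈ range (v+1), pochC (a+(k:ℂ)) l * p^l * pochC ((k:ℂ)+((u:ℕ):ℂ)) (v-l)
                / ((l.factorial : ℂ) * ((v-l).factorial : ℂ))))
          (fun u v => pochC b (u+v) / ((u.factorial:ℂ) * (v.factorial:ℂ)))
    _ = ∑ k ∈ range (min n m + 1),
        pochC a k * (p^2-p)^k / (k.factorial : ℂ)
          * Sfn (n-k) (a+(k:ℂ)) b p * Sfn (m-k) (a+(k:ℂ)) (b+(n:ℂ)) p := by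
        refine Finset.sum_congr rfl fun k hk => ?_
        rw [mem_range] at hk
        have hkn : k ≤ n := by omega
        have hkm : k ≤ m := by omega
        calc ∑ i ∈ range ((n-k)+1), ∑ j ∈ range ((m-k)+1),
            (pochC a k * (p^2-p)^k / (k.factorial : ℂ)
              * (pochC (a+(k:ℂ)) i * p^i / (i.factorial : ℂ)
                * ∑ l ∈ range (j+1), pochC (a+(k:ℂ)) l * p^l * pochC ((k:ℂ)+((i:ℕ):ℂ)) (j-l)
                    / ((l.factorial : ℂ) * ((j-l).factorial : ℂ))))
            * (pochC b (((n-k)-i)+((m-k)-j)) / ((((n-k)-i).factorial:ℂ) * (((m-k)-j).factorial:ℂ)))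
            = pochC a k * (p^2-p)^k / (k.factorial : ℂ)
              * ∑ i ∈ range ((n-k)+1), ∑ j ∈ range ((m-k)+1),
                (pochC (a+(k:ℂ)) i * p^i / (i.factorial : ℂ)
                  * ∑ l ∈ range (j+1), pochC (a+(k:ℂ)) l * p^l * pochC ((k:ℂ)+(i:ℂ)) (j-l)
                      / ((l.factorial : ℂ) * ((j-l).factorial : ℂ)))
                * (pochC b ((n-k-i)+(m-k-j)) / (((n-k-i).factorial:ℂ) * ((m-k-j).factorial:ℂ))) := by
              conv_rhs => rw [Finset.mul_sum]
              refine Finset.sum_congr rfl fun i _ => ?_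
              conv_rhs => rw [Finset.mul_sum]
              refine Finset.sum_congr rfl fun j _ => ?_
              ring
          _ = pochC a k * (p^2-p)^k / (k.factorial : ℂ)
              * (Sfn (n-k) (a+(k:ℂ)) b p * Sfn (m-k) (a+(k:ℂ)) (b+(n:ℂ)) p) := by
              rw [Fk a b p n m k hkn hkm]
          _ = pochC a k * (p^2-p)^k / (k.factorial : ℂ)
              * Sfn (n-k) (a+(k:ℂ)) b p * Sfn (m-k) (a+(k:ℂ)) (b+(n:ℂ)) p := by ring

theorem burchnall_meixner_pollaczek_expansion (lam φ : ℝ) (hlam : 0 < lam) (hφ0 : 0 < φ)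
    (hφπ : φ < Real.pi) (m n : ℕ) (x : ℂ) :
    (((n + m).choose n : ℕ) : ℂ) * mpP (m + n) lam φ x =
      ∑ k ∈ Finset.range (min n m + 1),
        (-Complex.I) ^ k * Complex.exp (-(k : ℂ) * φ * Complex.I) / (k.factorial : ℂ) *
          (2 * Real.sin φ : ℝ) ^ k * pochC ((lam : ℂ) + Complex.I * x) k *
          mpP (n - k) (lam + k / 2) φ (x - Complex.I * k / 2) *
          mpP (m - k) (lam + (n + k) / 2) φ (x + Complex.I * ((n : ℂ) - k) / 2) := by
  set a := (lam:ℂ) + I*x with ha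
  set b := (lam:ℂ) - I*x with hb
  set p := Complex.exp (-2 * (φ:ℝ) * I) with hp
  -- rewrite the left mpP
  have hL : mpP (m + n) lam φ x = Complex.exp (((m+n:ℕ):ℂ) * φ * I) * Sfn (m+n) a b p :=
    mpP_eq (m+n) lam φ x hlam
  -- rewrite the two right mpP's
  have hR1 : ∀ k : ℕ, k ≤ n → mpP (n - k) (lam + k / 2) φ (x - Complex.I * k / 2)
      = Complex.exp (((n-k:ℕ):ℂ) * φ * I) * Sfn (n-k) (a+(k:ℂ)) b p := by
    intro k hk
    have hpos : (0:ℝ) < lam + (k:ℝ)/2 := by positivity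
    rw [mpP_eq (n-k) (lam + k/2) φ (x - Complex.I * k / 2) hpos]
    have e1 : ((lam + (k:ℝ)/2 : ℝ) : ℂ) + I * (x - Complex.I * k / 2) = a + (k:ℂ) := by
      rw [ha]; push_cast
      linear_combination (-(k:ℂ)/2) * Complex.I_mul_I
    have e2 : ((lam + (k:ℝ)/2 : ℝ) : ℂ) - I * (x - Complex.I * k / 2) = b := by
      rw [hb]; push_cast
      linear_combination ((k:ℂ)/2) * Complex.I_mul_I
    rw [e1, e2]
  have hR2 : ∀ k : ℕ, k ≤ min n m → mpP (m - k) (lam + (n + k) / 2) φ (x + Complex.I * ((n : ℂ) - k) / 2)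
      = Complex.exp (((m-k:ℕ):ℂ) * φ * I) * Sfn (m-k) (a+(k:ℂ)) (b+(n:ℂ)) p := by
    intro k hk
    have hpos : (0:ℝ) < lam + ((n:ℝ) + (k:ℝ))/2 := by positivity
    rw [mpP_eq (m-k) (lam + ((n:ℝ)+(k:ℝ))/2) φ (x + Complex.I * ((n : ℂ) - k) / 2) hpos]
    have e1 : ((lam + ((n:ℝ)+(k:ℝ))/2 : ℝ) : ℂ) + I * (x + Complex.I * ((n : ℂ) - k) / 2) = a + (k:ℂ) := by
      rw [ha]; push_cast
      linear_combination (((n:ℂ)-(k:ℂ))/2) * Complex.I_mul_I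
    have e2 : ((lam + ((n:ℝ)+(k:ℝ))/2 : ℝ) : ℂ) - I * (x + Complex.I * ((n : ℂ) - k) / 2) = b + (n:ℂ) := by
      rw [hb]; push_cast
      linear_combination (-((n:ℂ)-(k:ℂ))/2) * Complex.I_mul_I
    rw [e1, e2]
  -- coefficient identity
  have coefk : ∀ k : ℕ, k ≤ n → k ≤ m →
      (-I)^k * Complex.exp (-(k:ℂ) * φ * I) / (k.factorial:ℂ) * ((2 * Real.sin φ : ℝ):ℂ)^k
        * (Complex.exp (((n-k:ℕ):ℂ) * φ * I) * Complex.exp (((m-k:ℕ):ℂ) * φ * I))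
      = Complex.exp (((m+n:ℕ):ℂ) * φ * I) * ((p^2-p)^k / (k.factorial:ℂ)) := by
    intro k hkn hkm
    have e1 : Complex.exp (-(k:ℂ) * φ * I) = (Complex.exp (-(φ:ℂ) * I))^k := by
      rw [← Complex.exp_nat_mul]; congr 1; ring
    have e2 : Complex.exp (((n-k:ℕ):ℂ) * φ * I) * Complex.exp (((m-k:ℕ):ℂ) * φ * I)
        = Complex.exp (((m+n:ℕ):ℂ) * φ * I) * p^k := by
      rw [hp, ← Complex.exp_nat_mul, ← Complex.exp_add, ← Complex.exp_add]
      congr 1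
      push_cast [Nat.cast_sub hkn, Nat.cast_sub hkm]
      ring
    have e3 : ((2 * Real.sin φ : ℝ):ℂ) = (Complex.exp (-(φ:ℂ)*I) - Complex.exp ((φ:ℂ)*I)) * I := by
      push_cast
      rw [Complex.sin]
      ring
    have e5 : (-I)^k * (Complex.exp (-(φ:ℂ)*I))^k
        * ((Complex.exp (-(φ:ℂ)*I) - Complex.exp ((φ:ℂ)*I)) * I)^k = (p - 1)^k := by
      rw [← mul_pow, ← mul_pow]
      congr 1
      calc (-I) * Complex.exp (-(φ:ℂ)*I) * ((Complex.exp (-(φ:ℂ)*I) - Complex.exp ((φ:ℂ)*I)) * I)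
          = (I*I) * (-1) * ((Complex.exp (-(φ:ℂ)*I) - Complex.exp ((φ:ℂ)*I)) * Complex.exp (-(φ:ℂ)*I)) := by
            ring
        _ = (Complex.exp (-(φ:ℂ)*I) - Complex.exp ((φ:ℂ)*I)) * Complex.exp (-(φ:ℂ)*I) := by
            rw [Complex.I_mul_I]; ring
        _ = p - 1 := by
            rw [sub_mul, ← Complex.exp_add, ← Complex.exp_add,
              show -(φ:ℂ)*I + -(φ:ℂ)*I = -2*(φ:ℂ)*I by ring,
              show (φ:ℂ)*I + -(φ:ℂ)*I = (0:ℂ) by ring, Complex.exp_zero, hp]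
    rw [e1, e2, e3]
    have hpp : (p^2 - p)^k = (p-1)^k * p^k := by
      rw [show p^2 - p = (p-1)*p by ring, mul_pow]
    rw [hpp]
    linear_combination (Complex.exp (((m+n:ℕ):ℂ) * φ * I) * p^k / (k.factorial:ℂ)) * e5
  -- assemble
  rw [hL]
  calc (((n + m).choose n : ℕ) : ℂ) * (Complex.exp (((m+n:ℕ):ℂ) * φ * I) * Sfn (m+n) a b p)
      = Complex.exp (((m+n:ℕ):ℂ) * φ * I) * ((((n + m).choose n : ℕ) : ℂ) * Sfn (n+m) a b p) := by
        rw [Nat.add_comm m n]; ring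
    _ = Complex.exp (((m+n:ℕ):ℂ) * φ * I) * ∑ k ∈ range (min n m + 1),
          pochC a k * (p^2-p)^k / (k.factorial : ℂ)
            * Sfn (n-k) (a+(k:ℂ)) b p * Sfn (m-k) (a+(k:ℂ)) (b+(n:ℂ)) p := by
        rw [star a b p n m]
    _ = ∑ k ∈ Finset.range (min n m + 1),
        (-Complex.I) ^ k * Complex.exp (-(k : ℂ) * φ * Complex.I) / (k.factorial : ℂ) *
          (2 * Real.sin φ : ℝ) ^ k * pochC ((lam : ℂ) + Complex.I * x) k *
          mpP (n - k) (lam + k / 2) φ (x - Complex.I * k / 2) *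
          mpP (m - k) (lam + (n + k) / 2) φ (x + Complex.I * ((n : ℂ) - k) / 2) := by
        rw [Finset.mul_sum]
        refine Finset.sum_congr rfl fun k hk => ?_
        rw [mem_range] at hk
        have hkn : k ≤ n := by omega
        have hkm : k ≤ m := by omega
        rw [hR1 k hkn, hR2 k (by omega : k ≤ min n m)]
        calc Complex.exp (((m+n:ℕ):ℂ) * φ * I)
            * (pochC a k * (p^2-p)^k / (k.factorial : ℂ)
              * Sfn (n-k) (a+(k:ℂ)) b p * Sfn (m-k) (a+(k:ℂ)) (b+(n:ℂ)) p)
            = (Complex.exp (((m+n:ℕ):ℂ) * φ * I) * ((p^2-p)^k / (k.factorial:ℂ)))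
              * (pochC a k * Sfn (n-k) (a+(k:ℂ)) b p * Sfn (m-k) (a+(k:ℂ)) (b+(n:ℂ)) p) := by
              ring
          _ = ((-I)^k * Complex.exp (-(k:ℂ) * φ * I) / (k.factorial:ℂ) * ((2 * Real.sin φ : ℝ):ℂ)^k
              * (Complex.exp (((n-k:ℕ):ℂ) * φ * I) * Complex.exp (((m-k:ℕ):ℂ) * φ * I)))
              * (pochC a k * Sfn (n-k) (a+(k:ℂ)) b p * Sfn (m-k) (a+(k:ℂ)) (b+(n:ℂ)) p) := by
              rw [coefk k hkn hkm]
          _ = (-Complex.I) ^ k * Complex.exp (-(k : ℂ) * φ * Complex.I) / (k.factorial : ℂ) *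
              (2 * Real.sin φ : ℝ) ^ k * pochC a k *
              (Complex.exp (((n-k:ℕ):ℂ) * φ * I) * Sfn (n-k) (a+(k:ℂ)) b p) *
              (Complex.exp (((m-k:ℕ):ℂ) * φ * I) * Sfn (m-k) (a+(k:ℂ)) (b+(n:ℂ)) p) := by
              ring
end
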